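/- For every α with 1 < α < ((1+√5)/2)² one has g₃(α) > max(1, α − 1); in particular, on this interval α·g₃(α) > α(α − 1). -/
import Mathlib


/-- `g₃(α) = (1 − α + √((1−α)² + 4α(2α²−2α+1))) / (2α)`. -/
noncomputable def g3 (α : ℝ) : ℝ :=
  (1 - α + Real.sqrt ((1 - α) ^ 2 + 4 * α * (2 * α ^ 2 - 2 * α + 1))) / (2 * α)

/-- For `1 < α < ((1+√5)/2)²` one has `g₃(α) > max(1, α − 1)`; in particular
`α·g₃(α) > α(α − 1)` on this interval. -/
theorem g3_improvement_range (α : ℝ) (h1 : 1 < α)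
    (h2 : α < ((1 + Real.sqrt 5) / 2) ^ 2) :
    max 1 (α - 1) < g3 α ∧ α * (α - 1) < α * g3 α := by
  have h5 : Real.sqrt 5 ^ 2 = 5 := Real.sq_sqrt (by norm_num)
  have h5n : (0:ℝ) ≤ Real.sqrt 5 := Real.sqrt_nonneg 5
  -- key inequality α² - 3α + 1 < 0
  have hkey : α ^ 2 - 3 * α + 1 < 0 := by
    nlinarith [mul_pos (sub_pos.mpr h1) (show (0:ℝ) < Real.sqrt 5 + 3 - 2*α by nlinarith)]
  have hα : (0:ℝ) < α := by linarith
  have hD : (0:ℝ) ≤ (1 - α) ^ 2 + 4 * α * (2 * α ^ 2 - 2 * α + 1) := by nlinarith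
  set s := Real.sqrt ((1 - α) ^ 2 + 4 * α * (2 * α ^ 2 - 2 * α + 1)) with hs
  have hs2 : s ^ 2 = (1 - α) ^ 2 + 4 * α * (2 * α ^ 2 - 2 * α + 1) := Real.sq_sqrt hD
  have h1' : 3 * α - 1 < s := by
    rw [hs, show (3*α-1 : ℝ) = Real.sqrt ((3*α-1)^2) from
      (Real.sqrt_sq (by linarith)).symm]
    apply Real.sqrt_lt_sqrt (by positivity)
    nlinarith [sq_nonneg (α - 1)]
  have h2' : 2 * α ^ 2 - α - 1 < s := by
    rw [hs, show (2*α^2-α-1 : ℝ) = Real.sqrt ((2*α^2-α-1)^2) from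
      (Real.sqrt_sq (by nlinarith)).symm]
    apply Real.sqrt_lt_sqrt (by positivity)
    nlinarith [sq_nonneg α, mul_pos hα hα]
  have hg1 : 1 < g3 α := by
    rw [g3, lt_div_iff₀ (by linarith)]
    linarith
  have hg2 : α - 1 < g3 α := by
    rw [g3, lt_div_iff₀ (by linarith)]
    nlinarith
  refine ⟨max_lt hg1 hg2, ?_⟩
  exact mul_lt_mul_of_pos_left (by linarith) hα
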